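/- Let $\mathcal{A}$ be the $(N+1)\times(N+1)$ block unit lower bidiagonal matrix with identity diagonal blocks and subdiagonal blocks $-\Psi_1, \ldots, -\Psi_N$. Partition the time points into C-points $\{0, m, 2m, \ldots, N\}$ (with $m \mid N$) and F-points (the rest), and write $\mathcal{A}$ in the corresponding $2\times 2$ block form $\begin{bmatrix}\mathcal{A}_{FF} & \mathcal{A}_{FC} \\ \mathcal{A}_{CF} & \mathcal{A}_{CC}\end{bmatrix}$. Then the Schur complement $\mathcal{A}_{CC} - \mathcal{A}_{CF}\mathcal{A}_{FF}^{-1}\mathcal{A}_{FC}$ is the block unit lower bidiagonal matrix with identity diagonal blocks and subdiagonal blocks $-\mathcal{B}_{\Psi, km}^m$, where $\mathcal{B}_{\Psi, s}^l = \Psi_s \Psi_{s-1} \cdots \Psi_{s-l+1}$. -/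

import Mathlib

lemma divmod_unique' {m q r x : ℕ} (hm : 0 < m) (hr : r < m)
    (hx : x = m * q + r) : x / m = q ∧ x % m = r := by
  subst hx
  constructor
  · rw [Nat.mul_add_div hm, Nat.div_eq_of_lt hr, add_zero]
  · rw [Nat.mul_add_mod, Nat.mod_eq_of_lt hr]

/-- `Bprod Ψ s l = Ψ_s Ψ_{s-1} ⋯ Ψ_{s-l+1}` (with `Bprod Ψ s 0 = 1`). -/
def Bprod {n : ℕ} (Ψ : ℕ → Matrix (Fin n) (Fin n) ℝ) (s l : ℕ) :
    Matrix (Fin n) (Fin n) ℝ :=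
  ((List.range l).map (fun t => Ψ (s - t))).prod

lemma Bprod_zero {n : ℕ} (Ψ : ℕ → Matrix (Fin n) (Fin n) ℝ) (s : ℕ) :
    Bprod Ψ s 0 = 1 := by simp [Bprod]

lemma Bprod_succ_left {n : ℕ} (Ψ : ℕ → Matrix (Fin n) (Fin n) ℝ) (s l : ℕ) :
    Bprod Ψ s (l + 1) = Ψ s * Bprod Ψ (s - 1) l := by
  unfold Bprod
  rw [List.range_succ_eq_map]
  simp only [List.map_cons, List.map_map, List.prod_cons, Nat.sub_zero]
  congr 2
  refine List.map_congr_left fun t _ => ?_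
  simp only [Function.comp_apply]
  exact congrArg Ψ (by omega)

lemma Bprod_succ_right {n : ℕ} (Ψ : ℕ → Matrix (Fin n) (Fin n) ℝ) (s l : ℕ) :
    Bprod Ψ s (l + 1) = Bprod Ψ s l * Ψ (s - l) := by
  unfold Bprod
  rw [List.range_succ]
  simp

lemma Bprod_two {n : ℕ} (Ψ : ℕ → Matrix (Fin n) (Fin n) ℝ) (s t : ℕ) :
    Bprod Ψ s (t + 2) = Ψ s * Bprod Ψ (s - 1) t * Ψ (s - (t + 1)) := by
  rw [show t + 2 = (t + 1) + 1 from rfl, Bprod_succ_left, Bprod_succ_right, ← mul_assoc,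
    show s - 1 - t = s - (t + 1) by omega]

open Matrix in
/-- Schur complement identity: eliminating the F-points (indices not divisible
by `m`) from the block unit lower bidiagonal time-stepping matrix yields the
block unit lower bidiagonal matrix whose subdiagonal blocks are the products
`−𝓑_{Ψ,km}^m` of `m` consecutive fine-grid propagators. -/
theorem stmt_6 {n N m Nc : ℕ} (hm : 2 ≤ m) (hN : N = m * Nc)
    (Ψ : ℕ → Matrix (Fin n) (Fin n) ℝ)
    (A : Matrix (Fin (N + 1)) (Fin (N + 1)) (Matrix (Fin n) (Fin n) ℝ))
    (hA : ∀ j i : Fin (N + 1), A j i =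
      if (j : ℕ) = (i : ℕ) then 1
      else if (j : ℕ) = (i : ℕ) + 1 then -(Ψ (j : ℕ)) else 0)
    (c : Fin (Nc + 1) → Fin (N + 1)) (hc : ∀ k, (c k : ℕ) = (k : ℕ) * m) :
    ∃ B : Matrix {j : Fin (N + 1) // ¬ m ∣ (j : ℕ)}
        {j : Fin (N + 1) // ¬ m ∣ (j : ℕ)} (Matrix (Fin n) (Fin n) ℝ),
      (A.submatrix Subtype.val Subtype.val) * B = 1 ∧
      B * (A.submatrix Subtype.val Subtype.val) = 1 ∧
      A.submatrix c c -
          (A.submatrix c (Subtype.val : {j : Fin (N + 1) // ¬ m ∣ (j : ℕ)} → Fin (N + 1))) * B *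
            (A.submatrix (Subtype.val : {j : Fin (N + 1) // ¬ m ∣ (j : ℕ)} → Fin (N + 1)) c) =
        Matrix.of (fun k i : Fin (Nc + 1) =>
          if (k : ℕ) = (i : ℕ) then 1
          else if (k : ℕ) = (i : ℕ) + 1 then -(Bprod Ψ ((k : ℕ) * m) m)
          else 0) := by
  classical
  have hm0 : 0 < m := by omega
  -- non-divisibility as nonzero remainder
  have hmod : ∀ x : ℕ, ¬ m ∣ x → x % m ≠ 0 :=
    fun x hx hh => hx (Nat.dvd_of_mod_eq_zero hh)
  -- the inverse of the FF block
  set B : Matrix {j : Fin (N + 1) // ¬ m ∣ (j : ℕ)}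
      {j : Fin (N + 1) // ¬ m ∣ (j : ℕ)} (Matrix (Fin n) (Fin n) ℝ) :=
    fun j i => if (i.1 : ℕ) / m = (j.1 : ℕ) / m ∧ (i.1 : ℕ) ≤ (j.1 : ℕ)
      then Bprod Ψ (j.1 : ℕ) ((j.1 : ℕ) - (i.1 : ℕ)) else 0 with hB
  refine ⟨B, ?_, ?_, ?_⟩
  · -- A_FF * B = 1
    ext j i
    rw [Matrix.mul_apply, Matrix.one_apply]
    have hj := j.2
    have hi := i.2
    have hterm : ∀ k : {x : Fin (N + 1) // ¬ m ∣ (x : ℕ)},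
        A.submatrix Subtype.val Subtype.val j k * B k i
        = (if j = k then B k i else 0)
          + (if (j.1 : ℕ) = (k.1 : ℕ) + 1 then (-(Ψ (j.1 : ℕ))) * B k i else 0) := by
      intro k
      rw [Matrix.submatrix_apply, hA]
      by_cases h1 : (j.1 : ℕ) = (k.1 : ℕ)
      · have he : j = k := Subtype.ext (Fin.ext h1)
        rw [if_pos h1, if_pos he, if_neg (by omega), add_zero, one_mul]
      · have he : ¬ j = k := fun hh => h1 (congrArg (fun x => ((x.1 : ℕ))) hh)
        rw [if_neg h1, if_neg he, zero_add]
        by_cases h2 : (j.1 : ℕ) = (k.1 : ℕ) + 1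
        · rw [if_pos h2, if_pos h2]
        · rw [if_neg h2, if_neg h2, zero_mul]
    rw [Finset.sum_congr rfl (fun k _ => hterm k), Finset.sum_add_distrib,
      Finset.sum_ite_eq]
    simp only [Finset.mem_univ, if_true]
    by_cases hpred : m ∣ ((j.1 : ℕ) - 1)
    · -- predecessor is a C-point : j % m = 1
      have hS2 : (∑ k : {x : Fin (N + 1) // ¬ m ∣ (x : ℕ)},
          if (j.1 : ℕ) = (k.1 : ℕ) + 1 then (-(Ψ (j.1 : ℕ))) * B k i else 0) = 0 :=
        Finset.sum_eq_zero fun k _ => if_neg fun hh =>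
          k.2 (by rw [show ((k.1 : ℕ)) = (j.1 : ℕ) - 1 by omega]; exact hpred)
      rw [hS2, add_zero]
      obtain ⟨t, ht⟩ := hpred
      have hjpos : (j.1 : ℕ) ≠ 0 := fun h0 => hj (h0 ▸ Dvd.intro 0 rfl)
      have hdm := divmod_unique' hm0 (show 1 < m by omega)
        (show (j.1 : ℕ) = m * t + 1 by omega)
      by_cases hji : j = i
      · subst hji
        rw [if_pos rfl]
        simp [hB, Nat.sub_self, Bprod_zero]
      · rw [if_neg hji]
        simp only [hB]
        rw [if_neg]
        rintro ⟨hdiv, hle⟩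
        have hne : (i.1 : ℕ) ≠ (j.1 : ℕ) := fun hh => hji (Subtype.ext (Fin.ext hh.symm))
        have h2 := Nat.div_add_mod (i.1 : ℕ) m
        have h3 : (i.1 : ℕ) % m ≠ 0 := hmod _ hi
        have h4 : (i.1 : ℕ) % m < m := Nat.mod_lt _ hm0
        rw [hdiv, hdm.1] at h2
        omega
    · -- predecessor is an F-point
      have hjpos : 1 ≤ (j.1 : ℕ) := by
        rcases Nat.eq_zero_or_pos (j.1 : ℕ) with h | h
        · exact absurd (by simp [h]) hpred
        · exact h
      set p : {x : Fin (N + 1) // ¬ m ∣ (x : ℕ)} :=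
        ⟨⟨(j.1 : ℕ) - 1, by have := j.1.isLt; omega⟩, hpred⟩ with hp
      have hpv : (p.1 : ℕ) = (j.1 : ℕ) - 1 := rfl
      have hcong : ∀ k : {x : Fin (N + 1) // ¬ m ∣ (x : ℕ)},
          (if (j.1 : ℕ) = (k.1 : ℕ) + 1 then (-(Ψ (j.1 : ℕ))) * B k i else 0)
          = (if p = k then (-(Ψ (j.1 : ℕ))) * B k i else 0) := by
        intro k
        refine if_congr ⟨fun hh => Subtype.ext (Fin.ext ?_), fun hh => ?_⟩ rfl rfl
        · rw [hpv]; omega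
        · have h' : (p.1 : ℕ) = (k.1 : ℕ) := congrArg (fun x => ((x.1 : ℕ))) hh
          rw [hpv] at h'; omega
      rw [Finset.sum_congr rfl (fun k _ => hcong k), Finset.sum_ite_eq]
      simp only [Finset.mem_univ, if_true]
      have h1 := Nat.div_add_mod (j.1 : ℕ) m
      have hr1 : (j.1 : ℕ) % m ≠ 0 := hmod _ hj
      have hrlt : (j.1 : ℕ) % m < m := Nat.mod_lt _ hm0
      have hr2 : 2 ≤ (j.1 : ℕ) % m := by
        by_contra hh
        exact hpred ⟨(j.1 : ℕ) / m, by omega⟩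
      have hpredd := divmod_unique' hm0 (show (j.1 : ℕ) % m - 1 < m by omega)
        (show (j.1 : ℕ) - 1 = m * ((j.1 : ℕ) / m) + ((j.1 : ℕ) % m - 1) by omega)
      by_cases hji : j = i
      · subst hji
        rw [if_pos rfl]
        have hfalse : ¬((j.1 : ℕ) / m = ((j.1 : ℕ) - 1) / m ∧ (j.1 : ℕ) ≤ (j.1 : ℕ) - 1) := by
          rintro ⟨-, hle⟩; omega
        simp only [hB, hpv]
        rw [if_neg hfalse, mul_zero, add_zero]
        simp [Nat.sub_self, Bprod_zero]
      · rw [if_neg hji]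
        have hne : (j.1 : ℕ) ≠ (i.1 : ℕ) := fun hh => hji (Subtype.ext (Fin.ext hh))
        simp only [hB, hpv]
        by_cases hcnd : (i.1 : ℕ) / m = ((j.1 : ℕ) - 1) / m ∧ (i.1 : ℕ) ≤ (j.1 : ℕ) - 1
        · rw [if_pos hcnd, if_pos (⟨by rw [hcnd.1, hpredd.1], by omega⟩ :
            (i.1 : ℕ) / m = (j.1 : ℕ) / m ∧ (i.1 : ℕ) ≤ (j.1 : ℕ))]
          rw [show (j.1 : ℕ) - (i.1 : ℕ) = (((j.1 : ℕ) - 1) - (i.1 : ℕ)) + 1 by omega,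
            Bprod_succ_left, neg_mul, add_neg_cancel]
        · rw [if_neg hcnd, mul_zero, add_zero, if_neg]
          rintro ⟨hdiv, hle⟩
          exact hcnd ⟨by rw [hdiv, hpredd.1], by omega⟩
  · -- B * A_FF = 1
    ext j i
    rw [Matrix.mul_apply, Matrix.one_apply]
    have hj := j.2
    have hi := i.2
    have hterm : ∀ k : {x : Fin (N + 1) // ¬ m ∣ (x : ℕ)},
        B j k * A.submatrix Subtype.val Subtype.val k i
        = (if i = k then B j k else 0)
          + (if (k.1 : ℕ) = (i.1 : ℕ) + 1 then B j k * (-(Ψ ((i.1 : ℕ) + 1))) else 0) := by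
      intro k
      rw [Matrix.submatrix_apply, hA]
      by_cases h1 : (k.1 : ℕ) = (i.1 : ℕ)
      · have he : i = k := Subtype.ext (Fin.ext h1.symm)
        rw [if_pos h1, if_pos he, if_neg (by omega), add_zero, mul_one]
      · have he : ¬ i = k := fun hh => h1 (congrArg (fun x => ((x.1 : ℕ))) hh.symm)
        rw [if_neg h1, if_neg he, zero_add]
        by_cases h2 : (k.1 : ℕ) = (i.1 : ℕ) + 1
        · rw [if_pos h2, if_pos h2, h2]
        · rw [if_neg h2, if_neg h2, mul_zero]
    rw [Finset.sum_congr rfl (fun k _ => hterm k), Finset.sum_add_distrib,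
      Finset.sum_ite_eq]
    simp only [Finset.mem_univ, if_true]
    by_cases hsucc : m ∣ ((i.1 : ℕ) + 1)
    · -- successor is a C-point
      have hS2 : (∑ k : {x : Fin (N + 1) // ¬ m ∣ (x : ℕ)},
          if (k.1 : ℕ) = (i.1 : ℕ) + 1 then B j k * (-(Ψ ((i.1 : ℕ) + 1))) else 0) = 0 :=
        Finset.sum_eq_zero fun k _ => if_neg fun hh => k.2 (by rw [hh]; exact hsucc)
      rw [hS2, add_zero]
      by_cases hji : j = i
      · subst hji
        rw [if_pos rfl]
        simp [hB, Nat.sub_self, Bprod_zero]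
      · rw [if_neg hji]
        have hne : (j.1 : ℕ) ≠ (i.1 : ℕ) := fun hh => hji (Subtype.ext (Fin.ext hh))
        simp only [hB]
        rw [if_neg]
        rintro ⟨hdiv, hle⟩
        obtain ⟨t, ht⟩ := hsucc
        obtain ⟨t', rfl⟩ : ∃ t', t = t' + 1 := by
          cases t with
          | zero => omega
          | succ t' => exact ⟨t', rfl⟩
        have hmt : m * (t' + 1) = m * t' + m := by ring
        have hdmi := divmod_unique' hm0 (show m - 1 < m by omega)
          (show (i.1 : ℕ) = m * t' + (m - 1) by omega)
        have h1 := Nat.div_add_mod (j.1 : ℕ) m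
        have hrlt : (j.1 : ℕ) % m < m := Nat.mod_lt _ hm0
        have hjd : (j.1 : ℕ) / m = t' := by omega
        rw [hjd] at h1
        omega
    · -- successor is an F-point
      have hiN : (i.1 : ℕ) ≠ N := fun hh => hi ⟨Nc, by rw [hh]; exact hN⟩
      set s : {x : Fin (N + 1) // ¬ m ∣ (x : ℕ)} :=
        ⟨⟨(i.1 : ℕ) + 1, by have := i.1.isLt; omega⟩, hsucc⟩ with hs
      have hsv : (s.1 : ℕ) = (i.1 : ℕ) + 1 := rfl
      have hcong : ∀ k : {x : Fin (N + 1) // ¬ m ∣ (x : ℕ)},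
          (if (k.1 : ℕ) = (i.1 : ℕ) + 1 then B j k * (-(Ψ ((i.1 : ℕ) + 1))) else 0)
          = (if s = k then B j k * (-(Ψ ((i.1 : ℕ) + 1))) else 0) := by
        intro k
        refine if_congr ⟨fun hh => Subtype.ext (Fin.ext ?_), fun hh => ?_⟩ rfl rfl
        · rw [hsv]; omega
        · have h' : (s.1 : ℕ) = (k.1 : ℕ) := congrArg (fun x => ((x.1 : ℕ))) hh
          rw [hsv] at h'; omega
      rw [Finset.sum_congr rfl (fun k _ => hcong k), Finset.sum_ite_eq]
      simp only [Finset.mem_univ, if_true]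
      have hi1 := Nat.div_add_mod (i.1 : ℕ) m
      have hi2 : (i.1 : ℕ) % m ≠ 0 := hmod _ hi
      have hi3 : (i.1 : ℕ) % m < m := Nat.mod_lt _ hm0
      have hlt : (i.1 : ℕ) % m + 1 < m := by
        by_contra hh
        refine hsucc ⟨(i.1 : ℕ) / m + 1, ?_⟩
        have : m * ((i.1 : ℕ) / m + 1) = m * ((i.1 : ℕ) / m) + m := by ring
        omega
      have hdms := divmod_unique' hm0 hlt
        (show (i.1 : ℕ) + 1 = m * ((i.1 : ℕ) / m) + ((i.1 : ℕ) % m + 1) by omega)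
      by_cases hji : j = i
      · subst hji
        rw [if_pos rfl]
        have hfalse : ¬(((j.1 : ℕ) + 1) / m = (j.1 : ℕ) / m ∧ (j.1 : ℕ) + 1 ≤ (j.1 : ℕ)) := by
          rintro ⟨-, hle⟩; omega
        simp only [hB, hsv]
        rw [if_neg hfalse, zero_mul, add_zero]
        simp [Nat.sub_self, Bprod_zero]
      · rw [if_neg hji]
        have hne : (j.1 : ℕ) ≠ (i.1 : ℕ) := fun hh => hji (Subtype.ext (Fin.ext hh))
        simp only [hB, hsv]
        by_cases hcnd : ((i.1 : ℕ) + 1) / m = (j.1 : ℕ) / m ∧ (i.1 : ℕ) + 1 ≤ (j.1 : ℕ)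
        · rw [if_pos hcnd, if_pos (⟨by rw [← hdms.1, hcnd.1], by omega⟩ :
            (i.1 : ℕ) / m = (j.1 : ℕ) / m ∧ (i.1 : ℕ) ≤ (j.1 : ℕ))]
          rw [show (j.1 : ℕ) - (i.1 : ℕ) = ((j.1 : ℕ) - ((i.1 : ℕ) + 1)) + 1 by omega,
            Bprod_succ_right,
            show (j.1 : ℕ) - ((j.1 : ℕ) - ((i.1 : ℕ) + 1)) = (i.1 : ℕ) + 1 by omega,
            mul_neg, add_neg_cancel]
        · rw [if_neg hcnd, zero_mul, add_zero, if_neg]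
          rintro ⟨hdiv, hle⟩
          exact hcnd ⟨by rw [hdms.1, hdiv], by omega⟩
  · -- Schur complement
    refine Matrix.ext fun k i => ?_
    have hkle : (k : ℕ) ≤ Nc := by have := k.isLt; omega
    have hile : (i : ℕ) ≤ Nc := by have := i.isLt; omega
    have hACC : A.submatrix c c k i = if (k : ℕ) = (i : ℕ) then 1 else 0 := by
      rw [Matrix.submatrix_apply, hA, hc, hc]
      by_cases h : (k : ℕ) = (i : ℕ)
      · rw [if_pos (by rw [h]), if_pos h]
      · rw [if_neg, if_neg, if_neg h]
        · intro hh
          have h2 : (i : ℕ) < (k : ℕ) :=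
            lt_of_mul_lt_mul_right (show (i : ℕ) * m < (k : ℕ) * m by omega) (Nat.zero_le m)
          have h3 : ((i : ℕ) + 1) * m ≤ (k : ℕ) * m := mul_le_mul_left (by omega) m
          have h4 : ((i : ℕ) + 1) * m = (i : ℕ) * m + m := by ring
          omega
        · exact fun hh => h (Nat.eq_of_mul_eq_mul_right hm0 hh)
    have hT : ((A.submatrix c (Subtype.val : {j : Fin (N + 1) // ¬ m ∣ (j : ℕ)} → Fin (N + 1)) * B * A.submatrix (Subtype.val : {j : Fin (N + 1) // ¬ m ∣ (j : ℕ)} → Fin (N + 1)) c :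
        Matrix (Fin (Nc + 1)) (Fin (Nc + 1)) (Matrix (Fin n) (Fin n) ℝ))) k i
        = if (k : ℕ) = (i : ℕ) + 1 then Bprod Ψ ((k : ℕ) * m) m else 0 := by
      set CFB : Matrix (Fin (Nc + 1)) {x : Fin (N + 1) // ¬ m ∣ (x : ℕ)}
          (Matrix (Fin n) (Fin n) ℝ) := A.submatrix c Subtype.val * B with hCFB
      rw [Matrix.mul_apply]
      rw [show A.submatrix c (Subtype.val : {j : Fin (N + 1) // ¬ m ∣ (j : ℕ)} → Fin (N + 1)) * B = CFB from rfl]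
      by_cases hiNc : (i : ℕ) < Nc
      · -- the F-point i*m+1 exists
        have hle1 : (i : ℕ) * m + 1 ≤ N := by
          have h3 : ((i : ℕ) + 1) * m ≤ Nc * m := mul_le_mul_left (by omega) m
          have h4 : ((i : ℕ) + 1) * m = (i : ℕ) * m + m := by ring
          have h5 : Nc * m = m * Nc := Nat.mul_comm _ _
          omega
        have hgdvd : ¬ m ∣ ((i : ℕ) * m + 1) := by
          intro hh
          have h1 : m ∣ (i : ℕ) * m := dvd_mul_left m _
          have h2 := Nat.dvd_sub hh h1
          rw [show (i : ℕ) * m + 1 - (i : ℕ) * m = 1 by omega] at h2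
          exact absurd (Nat.le_of_dvd one_pos h2) (by omega)
        set g₀ : {x : Fin (N + 1) // ¬ m ∣ (x : ℕ)} :=
          ⟨⟨(i : ℕ) * m + 1, by omega⟩, hgdvd⟩ with hg0
        have hg0v : (g₀.1 : ℕ) = (i : ℕ) * m + 1 := rfl
        have hsum1 : ∀ g : {x : Fin (N + 1) // ¬ m ∣ (x : ℕ)},
            CFB k g * A.submatrix Subtype.val c g i
            = if g₀ = g then CFB k g * (-(Ψ ((i : ℕ) * m + 1)))
              else 0 := by
          intro g
          rw [Matrix.submatrix_apply, hA, hc]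
          by_cases h : (g.1 : ℕ) = (i : ℕ) * m + 1
          · have he : g₀ = g := Subtype.ext (Fin.ext (by rw [hg0v, h]))
            rw [if_neg (by omega), if_pos h, if_pos he, h]
          · have he : ¬ g₀ = g := fun hh => h (by rw [← congrArg (fun x => ((x.1 : ℕ))) hh, hg0v])
            rw [if_neg (fun hh => g.2 (by rw [hh]; exact dvd_mul_left m _)), if_neg h,
              mul_zero, if_neg he]
        rw [Finset.sum_congr rfl (fun g _ => hsum1 g), Finset.sum_ite_eq]
        simp only [Finset.mem_univ, if_true]
        rw [show CFB k g₀ =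
          ∑ f, A.submatrix c (Subtype.val : {j : Fin (N + 1) // ¬ m ∣ (j : ℕ)} → Fin (N + 1)) k f * B f g₀ from rfl]
        by_cases hk0 : 1 ≤ (k : ℕ)
        · -- the F-point k*m-1 exists
          have hkm : (k : ℕ) * m ≤ N := by
            have h3 : (k : ℕ) * m ≤ Nc * m := mul_le_mul_left hkle m
            have h5 : Nc * m = m * Nc := Nat.mul_comm _ _
            omega
          obtain ⟨k', hk'⟩ : ∃ k', (k : ℕ) = k' + 1 := ⟨(k : ℕ) - 1, by omega⟩
          have hmlow : 2 ≤ (k : ℕ) * m := by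
            have h3 : 1 * m ≤ (k : ℕ) * m := mul_le_mul_left (by omega) m
            omega
          have hrep : (k : ℕ) * m - 1 = m * k' + (m - 1) := by
            have h4 : (k' + 1) * m = k' * m + m := by ring
            have h5 : m * k' = k' * m := Nat.mul_comm _ _
            rw [hk']
            omega
          have hdivf := divmod_unique' hm0 (show m - 1 < m by omega) hrep
          have hfdvd : ¬ m ∣ ((k : ℕ) * m - 1) := by
            intro hh
            have h0 : ((k : ℕ) * m - 1) % m = 0 := Nat.dvd_iff_mod_eq_zero.mp hh
            have h1 := hdivf.2
            omega
          set f₀ : {x : Fin (N + 1) // ¬ m ∣ (x : ℕ)} :=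
            ⟨⟨(k : ℕ) * m - 1, by omega⟩, hfdvd⟩ with hf0
          have hf0v : (f₀.1 : ℕ) = (k : ℕ) * m - 1 := rfl
          have hsum2 : ∀ f : {x : Fin (N + 1) // ¬ m ∣ (x : ℕ)},
              A.submatrix c Subtype.val k f * B f g₀
              = if f₀ = f then (-(Ψ ((k : ℕ) * m))) * B f g₀ else 0 := by
            intro f
            rw [Matrix.submatrix_apply, hA, hc]
            by_cases h : (k : ℕ) * m = (f.1 : ℕ) + 1
            · have he : f₀ = f := Subtype.ext (Fin.ext (by rw [hf0v]; omega))
              rw [if_neg (fun hh => f.2 (by rw [← hh]; exact dvd_mul_left m _)), if_pos h,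
                if_pos he]
            · have he : ¬ f₀ = f := fun hh => by
                have h2 : (f₀.1 : ℕ) = (f.1 : ℕ) := congrArg (fun x => ((x.1 : ℕ))) hh
                rw [hf0v] at h2
                omega
              rw [if_neg (fun hh => f.2 (by rw [← hh]; exact dvd_mul_left m _)), if_neg h,
                zero_mul, if_neg he]
          rw [Finset.sum_congr rfl (fun f _ => hsum2 f), Finset.sum_ite_eq]
          simp only [Finset.mem_univ, if_true]
          have hdivg := divmod_unique' hm0 (show 1 < m by omega)
            (show (i : ℕ) * m + 1 = m * (i : ℕ) + 1 by rw [Nat.mul_comm])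
          simp only [hB, hf0v, hg0v]
          by_cases hki : (k : ℕ) = (i : ℕ) + 1
          · have hkim : (k : ℕ) * m = (i : ℕ) * m + m := by rw [hki]; ring
            rw [if_pos (⟨by rw [hdivf.1, hdivg.1]; omega, by omega⟩ :
              ((i : ℕ) * m + 1) / m = ((k : ℕ) * m - 1) / m ∧ (i : ℕ) * m + 1 ≤ (k : ℕ) * m - 1),
              if_pos hki]
            rw [show (k : ℕ) * m - 1 - ((i : ℕ) * m + 1) = m - 2 by omega]
            have key := Bprod_two Ψ ((k : ℕ) * m) (m - 2)
            rw [show (m - 2) + 2 = m by omega] at key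
            rw [show (k : ℕ) * m - ((m - 2) + 1) = (i : ℕ) * m + 1 by omega] at key
            rw [key, neg_mul, neg_mul_neg]
          · rw [if_neg (fun hcond => by
                have hd := hcond.1
                rw [hdivf.1, hdivg.1] at hd
                omega :
              ¬(((i : ℕ) * m + 1) / m = ((k : ℕ) * m - 1) / m ∧
                (i : ℕ) * m + 1 ≤ (k : ℕ) * m - 1)),
              if_neg hki, mul_zero, zero_mul]
        · -- k = 0 : the row of A_CF is zero
          have hz : ∀ f : {x : Fin (N + 1) // ¬ m ∣ (x : ℕ)},
              A.submatrix c Subtype.val k f = 0 := by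
            intro f
            rw [Matrix.submatrix_apply, hA, hc]
            rw [if_neg (fun hh => f.2 (by rw [← hh]; exact dvd_mul_left m _)), if_neg]
            intro hh
            have hk0' : (k : ℕ) = 0 := by omega
            rw [hk0', Nat.zero_mul] at hh
            omega
          rw [Finset.sum_eq_zero (fun f _ => by rw [hz f, zero_mul]), zero_mul,
            if_neg (by omega)]
      · -- i = Nc : the column of A_FC is zero
        have hz : ∀ g : {x : Fin (N + 1) // ¬ m ∣ (x : ℕ)},
            A.submatrix Subtype.val c g i = 0 := by
          intro g
          rw [Matrix.submatrix_apply, hA, hc]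
          rw [if_neg (fun hh => g.2 (by rw [hh]; exact dvd_mul_left m _)), if_neg]
          intro hh
          have hgN := g.1.isLt
          have hiNc' : (i : ℕ) = Nc := by omega
          have h5 : Nc * m = m * Nc := Nat.mul_comm _ _
          rw [hiNc'] at hh
          omega
        rw [Finset.sum_eq_zero (fun g _ => by rw [hz g, mul_zero]),
          if_neg (by omega)]
    rw [Matrix.sub_apply, hACC, hT, Matrix.of_apply]
    by_cases h1 : (k : ℕ) = (i : ℕ)
    · rw [if_pos h1, if_pos h1, if_neg (by omega), sub_zero]
    · rw [if_neg h1, if_neg h1]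
      by_cases h2 : (k : ℕ) = (i : ℕ) + 1
      · rw [if_pos h2, if_pos h2, zero_sub]
      · rw [if_neg h2, if_neg h2, sub_zero]
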